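/- Let (E,B) be a measurable space, n ≥ 1, and T a set of measurable functions from E to [−1,1] that is separable in the product topology on [−1,1]^E. Let ξ = (ξ_1,…,ξ_n) be an exchangeable random vector in ℝ^n with κ = E[|ξ_1|] < ∞ and ξ_1 + ⋯ + ξ_n = 0 almost surely. Define ḡ(x) = E[ sup_{t∈T} Σ_{i=1}^n ξ_i t(x_i) ] for x = (x_1,…,x_n) ∈ E^n. Then the function ḡ / (κ(3 − 2/n)) : E^n → ℝ is (2,0)-self-bounding. -/

import Mathlib

open MeasureTheory

set_option linter.unusedSectionVars false

namespace SBaux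

variable {E : Type*} {n : ℕ}

/-- pointwise sup functional -/
noncomputable def Sfun (T : Set (E → ℝ)) (x : Fin n → E) (v : Fin n → ℝ) : ℝ :=
  ⨆ t : T, ∑ i, v i * (t : E → ℝ) (x i)

variable {T : Set (E → ℝ)} (hTrange : ∀ t ∈ T, ∀ e, t e ∈ Set.Icc (-1 : ℝ) 1)
  {x : Fin n → E} {v : Fin n → ℝ}

include hTrange

lemma term_le (t : T) : ∑ i, v i * (t : E → ℝ) (x i) ≤ ∑ i, |v i| := by
  apply Finset.sum_le_sum
  intro i _
  calc v i * (t : E → ℝ) (x i) ≤ |v i * (t : E → ℝ) (x i)| := le_abs_self _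
    _ = |v i| * |(t : E → ℝ) (x i)| := abs_mul _ _
    _ ≤ |v i| * 1 := by
        apply mul_le_mul_of_nonneg_left _ (abs_nonneg _)
        have h := hTrange t t.2 (x i)
        exact abs_le.2 ⟨h.1, h.2⟩
    _ = |v i| := mul_one _

lemma neg_le_term (t : T) : -∑ i, |v i| ≤ ∑ i, v i * (t : E → ℝ) (x i) := by
  have := term_le (v := fun i => -v i) hTrange (x := x) t
  simpa [neg_mul, Finset.sum_neg_distrib, neg_le] using this

lemma bddAbove_range :
    BddAbove (Set.range fun t : T => ∑ i, v i * (t : E → ℝ) (x i)) := by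
  refine ⟨∑ i, |v i|, ?_⟩
  rintro y ⟨t, rfl⟩
  exact term_le hTrange t

lemma term_le_Sfun (t : T) : ∑ i, v i * (t : E → ℝ) (x i) ≤ Sfun T x v :=
  le_ciSup (bddAbove_range hTrange) t

lemma Sfun_le [Nonempty T] {c : ℝ} (h : ∀ t : T, ∑ i, v i * (t : E → ℝ) (x i) ≤ c) :
    Sfun T x v ≤ c := ciSup_le h

lemma Sfun_le_sum_abs [Nonempty T] : Sfun T x v ≤ ∑ i, |v i| :=
  Sfun_le hTrange (fun t => term_le hTrange t)

lemma neg_sum_abs_le_Sfun [Nonempty T] : -∑ i, |v i| ≤ Sfun T x v := by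
  obtain ⟨t⟩ := (inferInstance : Nonempty T)
  exact le_trans (neg_le_term hTrange t) (term_le_Sfun hTrange t)

lemma abs_Sfun_le [Nonempty T] : |Sfun T x v| ≤ ∑ i, |v i| :=
  abs_le.2 ⟨neg_sum_abs_le_Sfun hTrange, Sfun_le_sum_abs hTrange⟩

omit hTrange in
lemma Sfun_le' [Nonempty T] {c : ℝ} (h : ∀ t : T, ∑ i, v i * (t : E → ℝ) (x i) ≤ c) :
    Sfun T x v ≤ c := ciSup_le h

lemma Sfun_sub_le [Nonempty T] (w : Fin n → ℝ) :
    Sfun T x v - Sfun T x w ≤ ∑ i, |v i - w i| := by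
  rw [sub_le_iff_le_add]
  refine Sfun_le hTrange (fun t => ?_)
  have h1 : ∑ i, v i * (t : E → ℝ) (x i)
      = ∑ i, w i * (t : E → ℝ) (x i) + ∑ i, (v i - w i) * (t : E → ℝ) (x i) := by
    rw [← Finset.sum_add_distrib]; congr 1; ext i; ring
  rw [h1]
  have h2 := term_le_Sfun hTrange (v := w) (x := x) t
  have h3 := term_le hTrange (v := fun i => v i - w i) (x := x) t
  linarith

lemma lipschitz_Sfun [Nonempty T] :
    LipschitzWith n (fun v : Fin n → ℝ => Sfun T x v) := by
  apply LipschitzWith.of_dist_le_mul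
  intro v w
  rw [Real.dist_eq]
  have key : ∀ a b : Fin n → ℝ, Sfun T x a - Sfun T x b ≤ (n : ℝ) * dist a b := by
    intro a b
    refine le_trans (Sfun_sub_le hTrange b) ?_
    calc ∑ i, |a i - b i| ≤ ∑ _i : Fin n, dist a b := by
          apply Finset.sum_le_sum
          intro i _
          rw [← Real.dist_eq]
          exact dist_le_pi_dist a b i
      _ = (n : ℝ) * dist a b := by simp [Finset.sum_const, mul_comm]
  have h1 := key v w
  have h2 := key w v
  rw [abs_le]
  constructor
  · have : dist w v = dist v w := dist_comm w v
    rw [this] at h2; push_cast; linarith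
  · push_cast; linarith

lemma continuous_Sfun [Nonempty T] :
    Continuous (fun v : Fin n → ℝ => Sfun T x v) :=
  (lipschitz_Sfun hTrange).continuous


end SBaux

namespace SBaux

/-- modified weight vector: coordinate `i` zeroed, its weight spread over the others. -/
noncomputable def wz {n : ℕ} (i : Fin n) (v : Fin n → ℝ) : Fin n → ℝ :=
  fun j => if j = i then 0 else v j + v i / ((n : ℝ) - 1)

variable {n : ℕ}

lemma sum_ite_eq_else (i : Fin n) (A c : ℝ) :
    ∑ j : Fin n, (if j = i then A else c) = A + ((n:ℝ)-1) * c := by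
  have h : ∀ j : Fin n, (if j = i then A else c) = c + (if j = i then A - c else 0) := by
    intro j; by_cases hj : j = i <;> simp [hj]
  rw [Finset.sum_congr rfl (fun j _ => h j), Finset.sum_add_distrib,
    Finset.sum_ite_eq' Finset.univ i (fun _ => A - c)]
  simp only [Finset.sum_const, Finset.card_univ, Fintype.card_fin, nsmul_eq_mul,
    Finset.mem_univ, if_pos]
  ring

variable (hn2 : 2 ≤ n)
include hn2

lemma n1_pos : (0:ℝ) < (n : ℝ) - 1 := by
  have : (2:ℝ) ≤ (n:ℝ) := by exact_mod_cast hn2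
  linarith

/-- key identity: `wz i v` is the average of the `n` transposition-permuted copies of `v`,
when `v` sums to zero. -/
lemma wz_eq_avg (i : Fin n) (v : Fin n → ℝ) (hv : ∑ k, v k = 0) (j : Fin n) :
    wz i v j = (1 / ((n : ℝ) - 1)) * ∑ k, v (Equiv.swap i k j) := by
  have hne := (n1_pos hn2).ne'
  by_cases hji : j = i
  · subst hji
    have h0 : wz j v j = 0 := by simp [wz]
    have hsw : ∀ k : Fin n, (Equiv.swap j k) j = k := fun k => Equiv.swap_apply_left j k
    rw [h0, Finset.sum_congr rfl (fun k _ => by rw [hsw k]), hv, mul_zero]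
  · have h0 : wz i v j = v j + v i / ((n:ℝ)-1) := by simp [wz, hji]
    have hterm : ∀ k : Fin n, v (Equiv.swap i k j)
        = v j + (if k = j then v i - v j else 0) := by
      intro k
      by_cases hkj : k = j
      · subst hkj
        rw [Equiv.swap_apply_right]
        simp
      · have : (Equiv.swap i k) j = j :=
          Equiv.swap_apply_of_ne_of_ne hji (fun h => hkj h.symm)
        rw [this]
        simp [hkj]
    rw [h0, Finset.sum_congr rfl (fun k _ => hterm k), Finset.sum_add_distrib,
      Finset.sum_ite_eq' Finset.univ j (fun _ => v i - v j)]
    simp only [Finset.mem_univ, if_pos, Finset.sum_const, Finset.card_univ,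
      Fintype.card_fin, nsmul_eq_mul]
    field_simp
    ring

/-- sum over `i` of the modified weights. -/
lemma sum_wz (v : Fin n → ℝ) (hv : ∑ k, v k = 0) (j : Fin n) :
    ∑ i, wz i v j = ((n : ℝ) * ((n : ℝ) - 2) / ((n : ℝ) - 1)) * v j := by
  have hne := (n1_pos hn2).ne'
  have hterm : ∀ i : Fin n, wz i v j
      = (v j + v i / ((n:ℝ)-1)) + (if i = j then -(v j + v j / ((n:ℝ)-1)) else 0) := by
    intro i
    by_cases hij : j = i
    · subst hij; simp [wz]
    · have h1 : wz i v j = v j + v i / ((n:ℝ)-1) := by simp [wz, hij]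
      have h2 : i ≠ j := fun h => hij h.symm
      simp [h1, h2]
  rw [Finset.sum_congr rfl (fun i _ => hterm i), Finset.sum_add_distrib,
    Finset.sum_ite_eq' Finset.univ j (fun _ => -(v j + v j / ((n:ℝ)-1))),
    Finset.sum_add_distrib, ← Finset.sum_div, hv]
  simp only [Finset.mem_univ, if_pos, Finset.sum_const, Finset.card_univ, Fintype.card_fin,
    nsmul_eq_mul, zero_div, add_zero]
  field_simp
  ring

/-- difference bound: coordinates of `v - wz i v` weighted by `[-1,1]` values. -/
lemma abs_wz_sub (i : Fin n) (v : Fin n → ℝ) (u : Fin n → ℝ) (hu : ∀ j, |u j| ≤ 1) :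
    |∑ j, (v j - wz i v j) * u j| ≤ 2 * |v i| := by
  have hne := n1_pos hn2
  calc |∑ j, (v j - wz i v j) * u j| ≤ ∑ j, |(v j - wz i v j) * u j| :=
        Finset.abs_sum_le_sum_abs _ _
    _ ≤ ∑ j, (if j = i then |v i| else |v i| / ((n:ℝ)-1)) := by
        apply Finset.sum_le_sum
        intro j _
        rw [abs_mul]
        by_cases hji : j = i
        · subst hji
          have h0 : wz j v j = 0 := by simp [wz]
          rw [h0, sub_zero, if_pos rfl]
          calc |v j| * |u j| ≤ |v j| * 1 := mul_le_mul_of_nonneg_left (hu j) (abs_nonneg _)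
            _ = |v j| := mul_one _
        · have h0 : wz i v j = v j + v i / ((n:ℝ)-1) := by simp [wz, hji]
          rw [h0, if_neg hji]
          have h1 : v j - (v j + v i / ((n:ℝ)-1)) = -(v i / ((n:ℝ)-1)) := by ring
          rw [h1, abs_neg, abs_div, abs_of_pos hne]
          calc |v i| / ((n:ℝ)-1) * |u j| ≤ |v i| / ((n:ℝ)-1) * 1 :=
                mul_le_mul_of_nonneg_left (hu j) (by positivity)
            _ = |v i| / ((n:ℝ)-1) := mul_one _
    _ = 2 * |v i| := by
        rw [sum_ite_eq_else i]
        have : ((n:ℝ)-1) * (|v i| / ((n:ℝ)-1)) = |v i| := by field_simp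
        rw [this]; ring

/-- bound on the sum of absolute values of modified weights. -/
lemma sum_abs_wz_le (i : Fin n) (v : Fin n → ℝ) :
    ∑ j, |wz i v j| ≤ 2 * ∑ j, |v j| := by
  have hne := n1_pos hn2
  calc ∑ j, |wz i v j| ≤ ∑ j, (if j = i then (0:ℝ) else |v j| + |v i| / ((n:ℝ)-1)) := by
        apply Finset.sum_le_sum
        intro j _
        by_cases hji : j = i
        · subst hji; simp [wz]
        · have h0 : wz i v j = v j + v i / ((n:ℝ)-1) := by simp [wz, hji]
          rw [h0, if_neg hji]
          refine le_trans (abs_add_le _ _) ?_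
          rw [abs_div, abs_of_pos hne]
    _ ≤ ∑ j, (|v j| + (if j = i then (0:ℝ) else |v i| / ((n:ℝ)-1))) := by
        apply Finset.sum_le_sum
        intro j _
        by_cases hji : j = i
        · subst hji; simp only [if_pos rfl]; positivity
        · simp [hji]
    _ = ∑ j, |v j| + (0 + ((n:ℝ)-1) * (|v i| / ((n:ℝ)-1))) := by
        rw [Finset.sum_add_distrib, sum_ite_eq_else i]
    _ ≤ ∑ j, |v j| + ∑ j, |v j| := by
        have h1 : (0:ℝ) + ((n:ℝ)-1) * (|v i| / ((n:ℝ)-1)) = |v i| := by field_simp; ring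
        rw [h1]
        exact add_le_add (le_refl _) (Finset.single_le_sum (fun j _ => abs_nonneg (v j))
          (Finset.mem_univ i))
    _ = 2 * ∑ j, |v j| := by ring

end SBaux


/-- A function `f : Eⁿ → ℝ` is `(a,b)`-self-bounding if for every coordinate `i` there is a
function `gᵢ` not depending on the `i`-th coordinate such that `0 ≤ f x − gᵢ x ≤ 1` for all `x`
and `∑ i (f x − gᵢ x) ≤ a f x + b`. -/
def SelfBounding {E : Type*} {n : ℕ} (a b : ℝ) (f : (Fin n → E) → ℝ) : Prop :=
  ∃ g : Fin n → (Fin n → E) → ℝ,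
    (∀ i, ∀ x y : Fin n → E, (∀ j, j ≠ i → x j = y j) → g i x = g i y) ∧
    (∀ i, ∀ x, 0 ≤ f x - g i x ∧ f x - g i x ≤ 1) ∧
    (∀ x, ∑ i, (f x - g i x) ≤ a * f x + b)

/-- **Self-bounding property of the bootstrap conditional expectation** (Theorem 3.4).
Let `T` be a class of measurable `[-1,1]`-valued functions, separable in the product topology,
and let `ξ` be an exchangeable random vector with `κ = E|ξ₁| < ∞` and `∑ ξᵢ = 0` a.s.
Then `x ↦ ḡ(x) / (κ (3 − 2/n))` is `(2,0)`-self-bounding, where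
`ḡ(x) = E[sup_{t ∈ T} ∑ ξᵢ t(xᵢ)]`. -/
theorem selfBounding_bootstrap_conditional_expectation
    {E : Type*} [MeasurableSpace E] {n : ℕ} (hn : 0 < n)
    (T : Set (E → ℝ))
    (hTmeas : ∀ t ∈ T, Measurable t)
    (hTrange : ∀ t ∈ T, ∀ e, t e ∈ Set.Icc (-1 : ℝ) 1)
    (hTsep : TopologicalSpace.IsSeparable T)
    {Ω : Type*} [MeasurableSpace Ω] (μ : Measure Ω) [IsProbabilityMeasure μ]
    (ξ : Ω → Fin n → ℝ) (hξmeas : Measurable ξ)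
    (κ : ℝ) (hκ : κ = ∫ ω, |ξ ω ⟨0, hn⟩| ∂μ)
    (hξint : Integrable (fun ω => |ξ ω ⟨0, hn⟩|) μ)
    (hξexch : ∀ π : Equiv.Perm (Fin n),
      μ.map (fun ω => fun i => ξ ω (π i)) = μ.map ξ)
    (hξsum : ∀ᵐ ω ∂μ, ∑ i, ξ ω i = 0) :
    SelfBounding 2 0 (fun x : Fin n → E =>
      (∫ ω, ⨆ t : T, ∑ i, ξ ω i * (t : E → ℝ) (x i) ∂μ) / (κ * (3 - 2 / (n : ℝ)))) := by
  classical
  by_cases hDz : κ * (3 - 2 / (n : ℝ)) = 0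
  · exact ⟨fun _ _ => 0, fun i x y _ => rfl, fun i x => by simp [hDz], fun x => by simp [hDz]⟩
  by_cases hTe : Nonempty ↥T
  swap
  · haveI : IsEmpty ↥T := not_nonempty_iff.mp hTe
    exact ⟨fun _ _ => 0, fun i x y _ => rfl,
      fun i x => by simp [Real.iSup_of_isEmpty],
      fun x => by simp [Real.iSup_of_isEmpty]⟩
  -- basic positivity facts
  have hκ0 : 0 ≤ κ := hκ ▸ integral_nonneg (fun ω => abs_nonneg _)
  have hn2 : 2 ≤ n := by
    by_contra hc
    push_neg at hc
    have hn1 : n = 1 := by omega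
    apply hDz
    have hz : κ = 0 := by
      rw [hκ]
      have hz2 : (fun ω => |ξ ω ⟨0, hn⟩|) =ᵐ[μ] (fun _ => (0:ℝ)) := by
        refine hξsum.mono (fun ω hω => ?_)
        subst hn1
        simpa [Fin.sum_univ_one] using hω
      rw [integral_congr_ae hz2, integral_const, smul_zero]
    rw [hz, zero_mul]
  have hnR : (0:ℝ) < (n:ℝ) := by exact_mod_cast hn
  have hn2R : (2:ℝ) ≤ (n:ℝ) := by exact_mod_cast hn2
  have hn1R : (0:ℝ) < (n:ℝ) - 1 := by linarith
  have h3n : (0:ℝ) ≤ 3 - 2 / (n:ℝ) := by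
    have h1R : (1:ℝ) ≤ (n:ℝ) := by exact_mod_cast hn
    have h2 : 2 / (n:ℝ) ≤ 2 := by
      rw [div_le_iff₀ hnR]; nlinarith
    linarith
  have hDpos : 0 < κ * (3 - 2 / (n : ℝ)) :=
    lt_of_le_of_ne (mul_nonneg hκ0 h3n) (Ne.symm hDz)
  set D : ℝ := κ * (3 - 2 / (n : ℝ)) with hD
  -- notation
  set S : (Fin n → E) → (Fin n → ℝ) → ℝ := fun x v => SBaux.Sfun T x v with hS
  have hSdef : ∀ (x : Fin n → E),
      (fun ω => ⨆ t : T, ∑ i, ξ ω i * (t : E → ℝ) (x i)) = fun ω => S x (ξ ω) := fun x => rfl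
  -- exchangeability transfer for integrals
  have hpermmeas : ∀ π : Equiv.Perm (Fin n),
      Measurable (fun ω => fun i => ξ ω (π i)) := by
    intro π
    exact measurable_pi_lambda _ (fun i => (measurable_pi_apply (π i)).comp hξmeas)
  have M1 : ∀ (π : Equiv.Perm (Fin n)) (F : (Fin n → ℝ) → ℝ), Measurable F →
      ∫ ω, F (fun i => ξ ω (π i)) ∂μ = ∫ ω, F (ξ ω) ∂μ := by
    intro π F hF
    rw [← integral_map (hpermmeas π).aemeasurable hF.aestronglyMeasurable, hξexch π,
      integral_map hξmeas.aemeasurable hF.aestronglyMeasurable]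
  have M2 : ∀ (π : Equiv.Perm (Fin n)) (F : (Fin n → ℝ) → ℝ), Measurable F →
      Integrable (fun ω => F (ξ ω)) μ → Integrable (fun ω => F (fun i => ξ ω (π i))) μ := by
    intro π F hF hint
    have h1 : Integrable F (μ.map ξ) :=
      (integrable_map_measure hF.aestronglyMeasurable hξmeas.aemeasurable).2 hint
    have h2 : Integrable F (μ.map (fun ω => fun i => ξ ω (π i))) := by rwa [hξexch π]
    exact (integrable_map_measure hF.aestronglyMeasurable (hpermmeas π).aemeasurable).1 h2
  -- coordinates: integrability and moments
  have M3 : ∀ i : Fin n, Integrable (fun ω => |ξ ω i|) μ := by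
    intro i
    have hF : Measurable (fun v : Fin n → ℝ => |v ⟨0, hn⟩|) :=
      (measurable_pi_apply _).abs
    have := M2 (Equiv.swap ⟨0, hn⟩ i) _ hF hξint
    simpa [Equiv.swap_apply_left] using this
  have M4 : ∀ i : Fin n, ∫ ω, |ξ ω i| ∂μ = κ := by
    intro i
    have hF : Measurable (fun v : Fin n → ℝ => |v ⟨0, hn⟩|) :=
      (measurable_pi_apply _).abs
    have := M1 (Equiv.swap ⟨0, hn⟩ i) _ hF
    rw [hκ]
    simpa [Equiv.swap_apply_left] using this
  have M5 : ∀ i : Fin n, Integrable (fun ω => ξ ω i) μ := by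
    intro i
    have hm : AEStronglyMeasurable (fun ω => ξ ω i) μ :=
      ((measurable_pi_apply i).comp hξmeas).aestronglyMeasurable
    exact (integrable_norm_iff hm).1 (by simpa [Real.norm_eq_abs] using M3 i)
  have M6 : ∀ i : Fin n, ∫ ω, ξ ω i ∂μ = 0 := by
    have heq : ∀ i : Fin n, ∫ ω, ξ ω i ∂μ = ∫ ω, ξ ω ⟨0, hn⟩ ∂μ := by
      intro i
      have hF : Measurable (fun v : Fin n → ℝ => v ⟨0, hn⟩) := measurable_pi_apply _
      have := M1 (Equiv.swap ⟨0, hn⟩ i) _ hF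
      simpa [Equiv.swap_apply_left] using this
    have hsum : ∑ i : Fin n, ∫ ω, ξ ω i ∂μ = 0 := by
      rw [← integral_finset_sum _ (fun i _ => M5 i)]
      have : (fun ω => ∑ i, ξ ω i) =ᵐ[μ] (fun _ => (0:ℝ)) := hξsum.mono (fun ω h => h)
      rw [integral_congr_ae this, integral_const, smul_zero]
    have h0 : (n:ℝ) * ∫ ω, ξ ω ⟨0, hn⟩ ∂μ = 0 := by
      rw [← hsum, Finset.sum_congr rfl (fun i _ => heq i)]
      simp [Finset.sum_const, Finset.card_univ]
    intro i
    rw [heq i]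
    have := mul_eq_zero.1 h0
    rcases this with h | h
    · exact absurd h hnR.ne'
    · exact h
  -- integrability of sup-compositions
  have hSumAbsInt : Integrable (fun ω => ∑ j, |ξ ω j|) μ :=
    integrable_finset_sum _ (fun j _ => M3 j)
  have hScont : ∀ x : Fin n → E, Continuous (fun v => S x v) :=
    fun x => SBaux.continuous_Sfun hTrange
  have intS : ∀ (x : Fin n → E) (A : (Fin n → ℝ) → (Fin n → ℝ)), Continuous A →
      ∀ C : ℝ, (∀ v, ∑ j, |A v j| ≤ C * ∑ j, |v j|) →
      Integrable (fun ω => S x (A (ξ ω))) μ := by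
    intro x A hA C hC
    have hmeas : AEStronglyMeasurable (fun ω => S x (A (ξ ω))) μ :=
      (((hScont x).comp hA).measurable.comp hξmeas).aestronglyMeasurable
    refine Integrable.mono (hSumAbsInt.const_mul C) hmeas ?_
    refine Filter.Eventually.of_forall (fun ω => ?_)
    have h1 : |S x (A (ξ ω))| ≤ ∑ j, |A (ξ ω) j| := SBaux.abs_Sfun_le hTrange
    have h2 := hC (ξ ω)
    have h3 : (0:ℝ) ≤ ∑ j, |ξ ω j| := Finset.sum_nonneg (fun j _ => abs_nonneg _)
    rw [Real.norm_eq_abs, Real.norm_eq_abs]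
    have h4 := le_abs_self (C * ∑ j, |ξ ω j|)
    linarith
  have hwzcont : ∀ i : Fin n, Continuous (fun v : Fin n → ℝ => SBaux.wz i v) := by
    intro i
    refine continuous_pi (fun j => ?_)
    by_cases hji : j = i
    · simp only [SBaux.wz, if_pos hji]
      exact continuous_const
    · simp only [SBaux.wz, if_neg hji]
      exact ((continuous_apply j).add ((continuous_apply i).div_const _))
  have intS_id : ∀ x, Integrable (fun ω => S x (ξ ω)) μ := by
    intro x
    exact intS x id continuous_id 1 (fun v => by rw [one_mul]; exact le_refl _)
  have intS_wz : ∀ (x) (i : Fin n), Integrable (fun ω => S x (SBaux.wz i (ξ ω))) μ := by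
    intro x i
    exact intS x (SBaux.wz i) (hwzcont i) 2 (fun v => SBaux.sum_abs_wz_le hn2 i v)
  have intS_perm : ∀ (x) (π : Equiv.Perm (Fin n)),
      Integrable (fun ω => S x (fun j => ξ ω (π j))) μ := by
    intro x π
    exact M2 π (fun v => S x v) (hScont x).measurable (intS_id x)
  -- nonnegativity of h
  have hH0 : ∀ x, 0 ≤ ∫ ω, S x (ξ ω) ∂μ := by
    intro x
    obtain ⟨t₀⟩ := hTe
    have hint0 : Integrable (fun ω => ∑ i, ξ ω i * (t₀ : E → ℝ) (x i)) μ :=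
      integrable_finset_sum _ (fun i _ => (M5 i).mul_const _)
    have h1 : ∫ ω, (∑ i, ξ ω i * (t₀ : E → ℝ) (x i)) ∂μ = 0 := by
      rw [integral_finset_sum _ (fun i _ => (M5 i).mul_const _)]
      refine Finset.sum_eq_zero (fun i _ => ?_)
      rw [integral_mul_const, M6 i, zero_mul]
    rw [← h1]
    refine integral_mono hint0 (intS_id x) (fun ω => ?_)
    exact SBaux.term_le_Sfun hTrange t₀
  -- upper bound for h
  have hHle : ∀ x, ∫ ω, S x (ξ ω) ∂μ ≤ (n:ℝ) * κ := by
    intro x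
    have h1 : ∫ ω, S x (ξ ω) ∂μ ≤ ∫ ω, (∑ j, |ξ ω j|) ∂μ := by
      refine integral_mono (intS_id x) hSumAbsInt (fun ω => ?_)
      exact SBaux.Sfun_le_sum_abs hTrange
    have h2 : ∫ ω, (∑ j, |ξ ω j|) ∂μ = (n:ℝ) * κ := by
      rw [integral_finset_sum _ (fun j _ => M3 j), Finset.sum_congr rfl (fun j _ => M4 j)]
      simp [Finset.sum_const, Finset.card_univ]
    linarith
  -- abbreviation for the leave-one-out quantities
  set G : Fin n → (Fin n → E) → ℝ := fun i x => ∫ ω, S x (SBaux.wz i (ξ ω)) ∂μ with hG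
  have hu1 : ∀ (t : T) (x : Fin n → E) (j : Fin n), |(t : E → ℝ) (x j)| ≤ 1 := by
    intro t x j
    have h := hTrange t t.2 (x j)
    exact abs_le.2 ⟨h.1, h.2⟩
  -- K1 : G i x ≥ h x - 2κ
  have K1 : ∀ (i : Fin n) (x : Fin n → E),
      (∫ ω, S x (ξ ω) ∂μ) - 2 * κ ≤ G i x := by
    intro i x
    have hpt : ∀ v : Fin n → ℝ, S x v ≤ S x (SBaux.wz i v) + 2 * |v i| := by
      intro v
      refine SBaux.Sfun_le' (fun t => ?_)
      have h1 : ∑ j, v j * (t : E → ℝ) (x j)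
          = ∑ j, SBaux.wz i v j * (t : E → ℝ) (x j)
            + ∑ j, (v j - SBaux.wz i v j) * (t : E → ℝ) (x j) := by
        rw [← Finset.sum_add_distrib]
        exact Finset.sum_congr rfl (fun j _ => by ring)
      have h2 : ∑ j, SBaux.wz i v j * (t : E → ℝ) (x j) ≤ S x (SBaux.wz i v) :=
        SBaux.term_le_Sfun hTrange t
      have h3 := SBaux.abs_wz_sub hn2 i v (fun j => (t : E → ℝ) (x j)) (hu1 t x)
      have h4 := le_abs_self (∑ j, (v j - SBaux.wz i v j) * (t : E → ℝ) (x j))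
      rw [h1]
      linarith
    have hint : Integrable (fun ω => S x (SBaux.wz i (ξ ω)) + 2 * |ξ ω i|) μ :=
      (intS_wz x i).add ((M3 i).const_mul 2)
    have h5 : ∫ ω, S x (ξ ω) ∂μ ≤ ∫ ω, (S x (SBaux.wz i (ξ ω)) + 2 * |ξ ω i|) ∂μ :=
      integral_mono (intS_id x) hint (fun ω => hpt (ξ ω))
    rw [integral_add (intS_wz x i) ((M3 i).const_mul 2), integral_const_mul, M4 i] at h5
    linarith
  -- K2 : G i x ≤ (n/(n-1)) * h x
  have K2 : ∀ (i : Fin n) (x : Fin n → E),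
      G i x ≤ ((n:ℝ) / ((n:ℝ) - 1)) * ∫ ω, S x (ξ ω) ∂μ := by
    intro i x
    have hpt : ∀ v : Fin n → ℝ, (∑ k, v k = 0) →
        S x (SBaux.wz i v) ≤ (1 / ((n:ℝ)-1)) * ∑ k : Fin n, S x (fun j => v (Equiv.swap i k j)) := by
      intro v hv
      refine SBaux.Sfun_le' (fun t => ?_)
      have e1 : ∀ j : Fin n, SBaux.wz i v j * (t : E → ℝ) (x j)
          = (1 / ((n:ℝ)-1)) * ∑ k : Fin n, v (Equiv.swap i k j) * (t : E → ℝ) (x j) := by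
        intro j
        rw [SBaux.wz_eq_avg hn2 i v hv j, mul_assoc, Finset.sum_mul]
      have h1 : ∑ j, SBaux.wz i v j * (t : E → ℝ) (x j)
          = (1 / ((n:ℝ)-1)) * ∑ k : Fin n, ∑ j, v (Equiv.swap i k j) * (t : E → ℝ) (x j) := by
        rw [Finset.sum_congr rfl (fun j _ => e1 j), ← Finset.mul_sum, Finset.sum_comm]
      rw [h1]
      have h2 : ∑ k : Fin n, ∑ j, v (Equiv.swap i k j) * (t : E → ℝ) (x j)
          ≤ ∑ k : Fin n, S x (fun j => v (Equiv.swap i k j)) :=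
        Finset.sum_le_sum (fun k _ => SBaux.term_le_Sfun hTrange t)
      have h3 : (0:ℝ) ≤ 1 / ((n:ℝ)-1) := by positivity
      exact mul_le_mul_of_nonneg_left h2 h3
    have h5 : G i x ≤ ∫ ω, ((1 / ((n:ℝ)-1)) * ∑ k : Fin n, S x (fun j => ξ ω (Equiv.swap i k j))) ∂μ := by
      refine integral_mono_ae (intS_wz x i) ?_ ?_
      · exact (integrable_finset_sum _ (fun k _ => intS_perm x (Equiv.swap i k))).const_mul _
      · exact hξsum.mono (fun ω hω => hpt (ξ ω) hω)
    rw [integral_const_mul, integral_finset_sum _ (fun k _ => intS_perm x (Equiv.swap i k))] at h5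
    have h6 : ∀ k : Fin n, ∫ ω, S x (fun j => ξ ω (Equiv.swap i k j)) ∂μ = ∫ ω, S x (ξ ω) ∂μ :=
      fun k => M1 (Equiv.swap i k) (fun v => S x v) (hScont x).measurable
    rw [Finset.sum_congr rfl (fun k _ => h6 k), Finset.sum_const, Finset.card_univ] at h5
    simp only [Fintype.card_fin, nsmul_eq_mul] at h5
    calc G i x ≤ (1 / ((n:ℝ)-1)) * ((n:ℝ) * ∫ ω, S x (ξ ω) ∂μ) := h5
      _ = ((n:ℝ) / ((n:ℝ)-1)) * ∫ ω, S x (ξ ω) ∂μ := by ring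
  -- K3 : sum of G i x ≥ cn * h x
  have K3 : ∀ x : Fin n → E,
      ((n:ℝ) * ((n:ℝ)-2) / ((n:ℝ)-1)) * ∫ ω, S x (ξ ω) ∂μ ≤ ∑ i, G i x := by
    intro x
    have hcn : (0:ℝ) ≤ (n:ℝ) * ((n:ℝ)-2) / ((n:ℝ)-1) := by
      have : (0:ℝ) ≤ (n:ℝ) - 2 := by linarith
      positivity
    have hpt : ∀ v : Fin n → ℝ, (∑ k, v k = 0) →
        ((n:ℝ) * ((n:ℝ)-2) / ((n:ℝ)-1)) * S x v ≤ ∑ i, S x (SBaux.wz i v) := by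
      intro v hv
      set cn := (n:ℝ) * ((n:ℝ)-2) / ((n:ℝ)-1) with hcne
      have hterm : ∀ t : T, cn * (∑ j, v j * (t : E → ℝ) (x j)) ≤ ∑ i, S x (SBaux.wz i v) := by
        intro t
        have h1 : cn * (∑ j, v j * (t : E → ℝ) (x j))
            = ∑ i, ∑ j, SBaux.wz i v j * (t : E → ℝ) (x j) := by
          rw [Finset.sum_comm, Finset.mul_sum]
          refine Finset.sum_congr rfl (fun j _ => ?_)
          rw [← Finset.sum_mul, SBaux.sum_wz hn2 v hv j]
          ring
        rw [h1]
        exact Finset.sum_le_sum (fun i _ => SBaux.term_le_Sfun hTrange t)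
      rcases eq_or_lt_of_le hcn with hcz | hcp
      · obtain ⟨t₀⟩ := hTe
        have := hterm t₀
        rw [← hcz] at this ⊢
        simpa using this
      · have hSle : S x v ≤ (∑ i, S x (SBaux.wz i v)) / cn := by
          refine SBaux.Sfun_le' (fun t => ?_)
          rw [le_div_iff₀ hcp, mul_comm]
          exact hterm t
        calc cn * S x v ≤ cn * ((∑ i, S x (SBaux.wz i v)) / cn) :=
              mul_le_mul_of_nonneg_left hSle (le_of_lt hcp)
          _ = ∑ i, S x (SBaux.wz i v) := by field_simp
    have h5 : ∫ ω, (((n:ℝ) * ((n:ℝ)-2) / ((n:ℝ)-1)) * S x (ξ ω)) ∂μ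
        ≤ ∫ ω, (∑ i, S x (SBaux.wz i (ξ ω))) ∂μ := by
      refine integral_mono_ae ((intS_id x).const_mul _)
        (integrable_finset_sum _ (fun i _ => intS_wz x i)) ?_
      exact hξsum.mono (fun ω hω => hpt (ξ ω) hω)
    rw [integral_const_mul, integral_finset_sum _ (fun i _ => intS_wz x i)] at h5
    exact h5
  -- the self-bounding witnesses
  have hc1 : (0:ℝ) ≤ ((n:ℝ)-1)/(n:ℝ) := by positivity
  refine ⟨fun i x => (((n:ℝ)-1)/(n:ℝ) * G i x) / D, ?_, ?_, ?_⟩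
  · -- independence of the i-th coordinate
    intro i x y hxy
    have hSxy : ∀ v : Fin n → ℝ, S x (SBaux.wz i v) = S y (SBaux.wz i v) := by
      intro v
      refine iSup_congr (fun t => Finset.sum_congr rfl (fun j _ => ?_))
      by_cases hji : j = i
      · subst hji
        have h0 : SBaux.wz j v j = 0 := by simp [SBaux.wz]
        rw [h0, zero_mul, zero_mul]
      · rw [hxy j hji]
    have hGxy : G i x = G i y := by
      simp only [hG]
      exact congrArg _ (funext (fun ω => hSxy (ξ ω)))
    simp only [hGxy]
  · -- the increments are in [0,1]
    intro i x
    have hHdef : (∫ ω, ⨆ t : T, ∑ i, ξ ω i * (t : E → ℝ) (x i) ∂μ)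
        = ∫ ω, S x (ξ ω) ∂μ := rfl
    set H := ∫ ω, S x (ξ ω) ∂μ with hHs
    simp only [hHdef]
    rw [div_sub_div_same]
    constructor
    · apply div_nonneg _ (le_of_lt hDpos)
      rw [sub_nonneg]
      calc ((n:ℝ)-1)/(n:ℝ) * G i x
          ≤ ((n:ℝ)-1)/(n:ℝ) * (((n:ℝ)/((n:ℝ)-1)) * H) :=
            mul_le_mul_of_nonneg_left (K2 i x) hc1
        _ = H := by field_simp
    · rw [div_le_one hDpos]
      have key : (n:ℝ) * (H - ((n:ℝ)-1)/(n:ℝ) * G i x) ≤ (n:ℝ) * (κ * (3 - 2/(n:ℝ))) := by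
        have e1 : (n:ℝ) * (H - ((n:ℝ)-1)/(n:ℝ) * G i x)
            = (n:ℝ)*H - ((n:ℝ)-1) * G i x := by field_simp
        have e2 : (n:ℝ) * (κ * (3 - 2/(n:ℝ))) = 3*(n:ℝ)*κ - 2*κ := by field_simp
        rw [e1, e2]
        nlinarith [mul_le_mul_of_nonneg_left (K1 i x) (le_of_lt hn1R), hHle x, hκ0]
      have := le_of_mul_le_mul_left key hnR
      rw [hD]
      exact this
  · -- the self-bounding inequality
    intro x
    have hHdef : (∫ ω, ⨆ t : T, ∑ i, ξ ω i * (t : E → ℝ) (x i) ∂μ)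
        = ∫ ω, S x (ξ ω) ∂μ := rfl
    set H := ∫ ω, S x (ξ ω) ∂μ with hHs
    simp only [hHdef]
    have hnum : ∑ i : Fin n, (H - ((n:ℝ)-1)/(n:ℝ) * G i x) ≤ 2 * H := by
      have hs1 : ((n:ℝ)-2) * H ≤ ((n:ℝ)-1)/(n:ℝ) * ∑ i, G i x := by
        calc ((n:ℝ)-2) * H = ((n:ℝ)-1)/(n:ℝ) * (((n:ℝ) * ((n:ℝ)-2) / ((n:ℝ)-1)) * H) := by
              field_simp
          _ ≤ ((n:ℝ)-1)/(n:ℝ) * ∑ i, G i x := mul_le_mul_of_nonneg_left (K3 x) hc1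
      have hs2 : ∑ i : Fin n, (H - ((n:ℝ)-1)/(n:ℝ) * G i x)
          = (n:ℝ) * H - ((n:ℝ)-1)/(n:ℝ) * ∑ i, G i x := by
        rw [Finset.sum_sub_distrib, Finset.sum_const, Finset.card_univ, ← Finset.mul_sum]
        simp [nsmul_eq_mul]
      rw [hs2]
      linarith
    calc ∑ i : Fin n, (H / D - ((n:ℝ)-1)/(n:ℝ) * G i x / D)
        = (∑ i : Fin n, (H - ((n:ℝ)-1)/(n:ℝ) * G i x)) / D := by
          rw [Finset.sum_div]
          exact Finset.sum_congr rfl (fun i _ => div_sub_div_same _ _ _)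
      _ ≤ (2 * H) / D := by
          exact (div_le_div_iff_of_pos_right hDpos).mpr hnum
      _ = 2 * (H / D) + 0 := by ring
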